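/- Let A₁, A₂ be unital ℂ-algebras and let S₁, T₁ ∈ A₁ and S₂, T₂ ∈ A₂ all be nonzero, and let n ≥ 1. Then γ_n(S₁⊗1 + 1⊗S₂, T₁⊗1 + 1⊗T₂) = 0 in the algebraic tensor product A₁ ⊗ A₂ if and only if there exist positive integers l, m with l + m = n + 1 and λ ∈ ℂ such that γ_l(S₁ + λ·1, T₁) = 0 in A₁ and γ_m(S₂ − λ·1, T₂) = 0 in A₂. -/

import Mathlib

open scoped TensorProduct

/-- `γ_n(S,T) = Σ_{k=0}^n (−1)^{n−k} C(n,k) S^k T^{n−k}`. -/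
noncomputable def gamma {A : Type*} [Ring A] (n : ℕ) (S T : A) : A :=
  ∑ k ∈ Finset.range (n + 1), ((-1 : ℤ) ^ (n - k) * (n.choose k : ℤ)) • (S ^ k * T ^ (n - k))

namespace GammaAux

open Polynomial LinearMap TensorProduct

section OneAlgebra

variable {A : Type*} [Ring A] [Algebra ℂ A]

/-- The operator `x ↦ S * x - x * T`. -/
noncomputable def dop (S T : A) : Module.End ℂ A :=
  LinearMap.mulLeft ℂ S - LinearMap.mulRight ℂ T

lemma gamma_eq_pow (n : ℕ) (S T : A) : gamma n S T = ((dop S T) ^ n) 1 := by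
  have hc : Commute (LinearMap.mulLeft ℂ S) (-(LinearMap.mulRight ℂ T)) :=
    (LinearMap.commute_mulLeft_right S T).neg_right (R := Module.End ℂ A)
  rw [dop, sub_eq_add_neg, hc.add_pow, LinearMap.sum_apply]
  unfold gamma
  refine Finset.sum_congr rfl fun k hk => ?_
  rw [show (-(LinearMap.mulRight ℂ T)) ^ (n - k)
      = (-1) ^ (n - k) * (LinearMap.mulRight ℂ T) ^ (n - k) from neg_pow (R := Module.End ℂ A) _ _]
  simp only [Module.End.mul_apply, LinearMap.pow_mulLeft, LinearMap.pow_mulRight,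
    Module.End.natCast_apply, LinearMap.mulLeft_apply, LinearMap.mulRight_apply]
  rw [show ((-1 : Module.End ℂ A)) = ((-1 : ℤ) : Module.End ℂ A) by simp, ← Int.cast_pow,
    Module.End.intCast_apply]
  simp only [smul_mul_assoc, mul_smul_comm, one_mul, smul_smul]
  rw [mul_comm, mul_smul, natCast_zsmul, smul_comm]

lemma dop_add_smul (S T : A) (lam : ℂ) :
    dop (S + lam • 1) T = dop S T + lam • (1 : Module.End ℂ A) := by
  ext x
  simp only [dop, LinearMap.add_apply, LinearMap.sub_apply, LinearMap.smul_apply,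
    Module.End.one_apply, LinearMap.mulLeft_apply, LinearMap.mulRight_apply, add_mul,
    smul_mul_assoc, one_mul]
  abel

lemma dop_sub_smul (S T : A) (lam : ℂ) :
    dop (S - lam • 1) T = dop S T - lam • (1 : Module.End ℂ A) := by
  ext x
  simp only [dop, LinearMap.sub_apply, LinearMap.smul_apply, Module.End.one_apply,
    LinearMap.mulLeft_apply, LinearMap.mulRight_apply, sub_mul, smul_mul_assoc, one_mul]
  abel

lemma aeval_X_add_C (S T : A) (lam : ℂ) :
    aeval (dop S T) (X + C lam) = dop S T + lam • (1 : Module.End ℂ A) := by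
  rw [map_add, aeval_X, aeval_C]
  congr 1

lemma aeval_X_sub_C' (S T : A) (lam : ℂ) :
    aeval (dop S T) (X - C lam) = dop S T - lam • (1 : Module.End ℂ A) := by
  rw [map_sub, aeval_X, aeval_C]
  congr 1

lemma bridge1 (S T : A) (lam : ℂ) (l : ℕ) :
    gamma l (S + lam • 1) T = (aeval (dop S T) ((X + C lam) ^ l)) 1 := by
  rw [gamma_eq_pow, map_pow, aeval_X_add_C, dop_add_smul]

lemma bridge2 (S T : A) (lam : ℂ) (l : ℕ) :
    gamma l (S - lam • 1) T = (aeval (dop S T) ((X - C lam) ^ l)) 1 := by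
  rw [gamma_eq_pow, map_pow, aeval_X_sub_C', dop_sub_smul]

/-- The annihilator ideal of `1` under the polynomial action via `dop S T`. -/
noncomputable def annI (S T : A) : Ideal ℂ[X] where
  carrier := {p | (aeval (dop S T) p) 1 = 0}
  add_mem' := by
    intro a b ha hb
    simp only [Set.mem_setOf_eq, map_add, LinearMap.add_apply] at *
    rw [ha, hb, add_zero]
  zero_mem' := by simp
  smul_mem' := by
    intro c p hp
    simp only [Set.mem_setOf_eq, smul_eq_mul, map_mul, Module.End.mul_apply] at *
    rw [hp, map_zero]

lemma mem_annI {S T : A} {p : ℂ[X]} : p ∈ annI S T ↔ (aeval (dop S T) p) 1 = 0 := Iff.rfl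

lemma gamma_zero_of_le {S T : A} {l k : ℕ} (hlk : l ≤ k)
    (h : gamma l S T = 0) : gamma k S T = 0 := by
  rw [gamma_eq_pow] at h ⊢
  rw [show k = (k - l) + l by omega, pow_add, Module.End.mul_apply, h, map_zero]

end OneAlgebra

section TwoAlgebras

variable {A₁ A₂ : Type*} [Ring A₁] [Algebra ℂ A₁] [Ring A₂] [Algebra ℂ A₂]

lemma dop_tensor (S₁ T₁ : A₁) (S₂ T₂ : A₂) :
    dop (S₁ ⊗ₜ[ℂ] (1 : A₂) + (1 : A₁) ⊗ₜ[ℂ] S₂) (T₁ ⊗ₜ[ℂ] (1 : A₂) + (1 : A₁) ⊗ₜ[ℂ] T₂) =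
      LinearMap.rTensor A₂ (dop S₁ T₁) + LinearMap.lTensor A₁ (dop S₂ T₂) := by
  apply TensorProduct.ext'
  intro a b
  simp only [dop, LinearMap.sub_apply, LinearMap.add_apply, LinearMap.mulLeft_apply,
    LinearMap.mulRight_apply, LinearMap.rTensor_tmul, LinearMap.lTensor_tmul,
    Algebra.TensorProduct.tmul_mul_tmul, add_mul, mul_add, one_mul, mul_one,
    sub_tmul, tmul_sub]
  abel

lemma commute_rl (f : Module.End ℂ A₁) (g : Module.End ℂ A₂) :
    Commute (LinearMap.rTensor A₂ f) (LinearMap.lTensor A₁ g) := by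
  unfold Commute SemiconjBy
  rw [Module.End.mul_eq_comp, Module.End.mul_eq_comp, LinearMap.rTensor_comp_lTensor,
    LinearMap.lTensor_comp_rTensor]

lemma key_expand (S₁ T₁ : A₁) (S₂ T₂ : A₂) (n : ℕ) :
    gamma n (S₁ ⊗ₜ[ℂ] (1 : A₂) + (1 : A₁) ⊗ₜ[ℂ] S₂) (T₁ ⊗ₜ[ℂ] (1 : A₂) + (1 : A₁) ⊗ₜ[ℂ] T₂) =
      ∑ k ∈ Finset.range (n + 1),
        ((n.choose k : ℂ) • gamma k S₁ T₁) ⊗ₜ[ℂ] gamma (n - k) S₂ T₂ := by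
  rw [gamma_eq_pow, dop_tensor, (commute_rl (dop S₁ T₁) (dop S₂ T₂)).add_pow,
    LinearMap.sum_apply]
  refine Finset.sum_congr rfl fun k hk => ?_
  rw [Module.End.mul_apply, Module.End.mul_apply, LinearMap.rTensor_pow, LinearMap.lTensor_pow,
    Module.End.natCast_apply]
  have h1 : (1 : A₁ ⊗[ℂ] A₂) = (1 : A₁) ⊗ₜ[ℂ] (1 : A₂) := rfl
  rw [h1, gamma_eq_pow, gamma_eq_pow]
  rw [← Nat.cast_smul_eq_nsmul ℂ, map_smul, map_smul, LinearMap.lTensor_tmul,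
    LinearMap.rTensor_tmul, smul_tmul']

lemma tensor_shift (S₁ : A₁) (S₂ : A₂) (lam : ℂ) :
    S₁ ⊗ₜ[ℂ] (1 : A₂) + (1 : A₁) ⊗ₜ[ℂ] S₂ =
      (S₁ + lam • 1) ⊗ₜ[ℂ] (1 : A₂) + (1 : A₁) ⊗ₜ[ℂ] (S₂ - lam • 1) := by
  rw [add_tmul, tmul_sub, smul_tmul]
  abel

lemma key_expand_shift (S₁ T₁ : A₁) (S₂ T₂ : A₂) (n : ℕ) (lam : ℂ) :
    gamma n (S₁ ⊗ₜ[ℂ] (1 : A₂) + (1 : A₁) ⊗ₜ[ℂ] S₂) (T₁ ⊗ₜ[ℂ] (1 : A₂) + (1 : A₁) ⊗ₜ[ℂ] T₂) =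
      ∑ k ∈ Finset.range (n + 1),
        ((n.choose k : ℂ) • gamma k (S₁ + lam • 1) T₁) ⊗ₜ[ℂ]
          gamma (n - k) (S₂ - lam • 1) T₂ := by
  rw [tensor_shift S₁ S₂ lam, key_expand]

lemma dual_sum {ι : Type*} (s : Finset ι) (v : ι → A₁) (w : ι → A₂)
    (h : ∑ i ∈ s, v i ⊗ₜ[ℂ] w i = 0) (φ : Module.Dual ℂ A₁) :
    ∑ i ∈ s, φ (v i) • w i = 0 := by
  have h2 := congrArg (fun z => TensorProduct.lid ℂ A₂ (LinearMap.rTensor A₂ φ z)) h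
  simpa [map_sum] using h2

lemma dual_vanish {W : Submodule ℂ A₁} {φ : Module.Dual ℂ A₁} (hφ : W.map φ = ⊥)
    {x : A₁} (hx : x ∈ W) : φ x = 0 := by
  have := Submodule.mem_map_of_mem (f := φ) hx
  rw [hφ] at this
  simpa using this

theorem forward (S₁ T₁ : A₁) (S₂ T₂ : A₂) (hS₁ : S₁ ≠ 0) (hS₂ : S₂ ≠ 0)
    (n : ℕ) (hn : 1 ≤ n)
    (h : gamma n (S₁ ⊗ₜ[ℂ] (1 : A₂) + (1 : A₁) ⊗ₜ[ℂ] S₂)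
        (T₁ ⊗ₜ[ℂ] (1 : A₂) + (1 : A₁) ⊗ₜ[ℂ] T₂) = 0) :
    ∃ (l m : ℕ) (lam : ℂ), 0 < l ∧ 0 < m ∧ l + m = n + 1 ∧
      gamma l (S₁ + lam • 1) T₁ = 0 ∧ gamma m (S₂ - lam • 1) T₂ = 0 := by
  have one1 : (1 : A₁) ≠ 0 := fun h10 => hS₁ (by rw [← mul_one S₁, h10, mul_zero])
  have one2 : (1 : A₂) ≠ 0 := fun h10 => hS₂ (by rw [← mul_one S₂, h10, mul_zero])
  set d₁ := dop S₁ T₁ with hd₁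
  set d₂ := dop S₂ T₂ with hd₂
  -- the fundamental family of linear relations
  have relT : ∀ lam : ℂ, ∑ k ∈ Finset.range (n + 1),
      ((n.choose k : ℂ) • (aeval d₁ ((X + C lam) ^ k)) 1) ⊗ₜ[ℂ]
        ((aeval d₂ ((X - C lam) ^ (n - k))) 1) = 0 := by
    intro lam
    rw [← h, key_expand_shift S₁ T₁ S₂ T₂ n lam]
    refine Finset.sum_congr rfl fun k hk => ?_
    rw [bridge1, bridge2]
  have relφ : ∀ (lam : ℂ) (φ : Module.Dual ℂ A₁),
      ∑ k ∈ Finset.range (n + 1),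
        ((n.choose k : ℂ) * φ ((aeval d₁ ((X + C lam) ^ k)) 1)) •
          ((aeval d₂ ((X - C lam) ^ (n - k))) 1) = 0 := by
    intro lam φ
    have h2 := dual_sum _ _ _ (relT lam) φ
    simpa [map_smul, smul_smul] using h2
  -- Step 1: the annihilator ideal contains a nonzero element of degree ≤ n
  have step1 : ∃ p ∈ annI S₁ T₁, p ≠ 0 ∧ p.natDegree ≤ n := by
    by_contra hcon
    push_neg at hcon
    have small : ∀ p : ℂ[X], p ∈ annI S₁ T₁ → p.natDegree ≤ n → p = 0 := by
      intro p hpI hdeg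
      by_contra hne
      exact absurd hdeg (by simpa using hcon p hpI hne)
    -- then `d₁^n 1` is not in the span of the previous ones
    have hnm : (d₁ ^ n) 1 ∉ Submodule.span ℂ (Set.range fun k : Fin n => (d₁ ^ (k : ℕ)) 1) := by
      intro hmem
      rw [Submodule.mem_span_range_iff_exists_fun] at hmem
      obtain ⟨c, hc⟩ := hmem
      set q : ℂ[X] := X ^ n - ∑ j : Fin n, C (c j) * X ^ (j : ℕ) with hq
      have hqI : q ∈ annI S₁ T₁ := by
        rw [mem_annI]
        rw [hq]
        simp only [map_sub, map_sum, map_mul, map_pow, aeval_X, aeval_C,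
          LinearMap.sub_apply, LinearMap.sum_apply, Module.End.mul_apply,
          Module.algebraMap_end_apply]
        rw [sub_eq_zero, ← hc]
      have hqdeg : q.natDegree ≤ n := by
        apply le_trans (natDegree_sub_le _ _)
        simp only [natDegree_X_pow, max_le_iff, le_refl, true_and]
        apply le_trans (natDegree_sum_le _ _)
        simp only [Finset.fold_max_le]
        refine ⟨by omega, fun j _ => le_trans (natDegree_C_mul_le _ _) (by
          simpa using (Fin.is_le j).trans (by omega))⟩
      have hq0 := small q hqI hqdeg
      have : q.coeff n = 0 := by rw [hq0]; simp
      rw [hq] at this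
      simp only [coeff_sub, coeff_X_pow, if_pos rfl, finset_sum_coeff, coeff_C_mul,
        coeff_X_pow] at this
      have hzero : ∑ j : Fin n, c j * (if n = (j : ℕ) then (1:ℂ) else 0) = 0 := by
        apply Finset.sum_eq_zero
        intro j _
        rw [if_neg (by omega), mul_zero]
      rw [hzero] at this
      norm_num at this
    obtain ⟨φ, hφx, hφW⟩ := Submodule.exists_dual_map_eq_bot_of_notMem hnm inferInstance
    have hrel := relφ 0 φ
    have hterm : ∀ k ∈ Finset.range (n + 1), k ≠ n →
        ((n.choose k : ℂ) * φ ((aeval d₁ ((X + C (0:ℂ)) ^ k)) 1)) •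
          ((aeval d₂ ((X - C (0:ℂ)) ^ (n - k))) 1) = 0 := by
      intro k hk hkn
      rw [Finset.mem_range] at hk
      have hkW : (aeval d₁ ((X + C (0:ℂ)) ^ k)) 1 ∈
          Submodule.span ℂ (Set.range fun k : Fin n => (d₁ ^ (k : ℕ)) 1) := by
        apply Submodule.subset_span
        refine ⟨⟨k, by omega⟩, ?_⟩
        simp [map_pow]
      rw [dual_vanish hφW hkW, mul_zero, zero_smul]
    rw [Finset.sum_eq_single_of_mem n (Finset.self_mem_range_succ n) hterm] at hrel
    simp only [Nat.choose_self, Nat.cast_one, one_mul, Nat.sub_self, pow_zero, map_one,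
      Module.End.one_apply] at hrel
    rcases smul_eq_zero.mp hrel with h0 | h0
    · refine hφx ?_
      have : (aeval d₁ ((X + C (0:ℂ)) ^ n)) 1 = (d₁ ^ n) 1 := by simp [map_pow]
      rw [← this]
      exact h0
    · exact one2 h0
  obtain ⟨p₀, hp₀I, hp₀ne, hp₀deg⟩ := step1
  -- the monic generator f of the annihilator ideal
  obtain ⟨g, hgspan⟩ := (IsPrincipalIdealRing.principal (annI S₁ T₁)).principal
  have hgdvd : ∀ p ∈ annI S₁ T₁, g ∣ p := by
    intro p hp
    rw [hgspan] at hp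
    exact (Ideal.mem_span_singleton (α := ℂ[X])).mp hp
  have hgmem : g ∈ annI S₁ T₁ := by
    rw [hgspan]
    exact Ideal.subset_span rfl
  have hgne : g ≠ 0 := by
    rintro rfl
    exact hp₀ne (by simpa using hgdvd p₀ hp₀I)
  set f : ℂ[X] := g * C g.leadingCoeff⁻¹ with hf
  have hfmonic : f.Monic := monic_mul_leadingCoeff_inv hgne
  have hfI : f ∈ annI S₁ T₁ := Ideal.mul_mem_right _ _ hgmem
  have hfdvd : ∀ p ∈ annI S₁ T₁, f ∣ p := by
    intro p hp
    obtain ⟨q, hq⟩ := hgdvd p hp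
    exact ⟨C g.leadingCoeff * q, by
      rw [hq, hf]
      rw [mul_assoc, ← mul_assoc (C g.leadingCoeff⁻¹), ← map_mul,
        inv_mul_cancel₀ (leadingCoeff_ne_zero.mpr hgne), map_one, one_mul]⟩
  set l : ℕ := f.natDegree with hl
  have hl1 : 1 ≤ l := by
    by_contra hl0
    have : f = 1 := eq_one_of_monic_natDegree_zero hfmonic (by omega)
    rw [mem_annI, this] at hfI
    simp at hfI
    exact one1 hfI
  have hln : l ≤ n := le_trans (natDegree_le_of_dvd (hfdvd p₀ hp₀I) hp₀ne) hp₀deg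
  -- Main: if (X + C μ)^r divides f then the ``b`` sequence vanishes from n - r + 1 on
  have main : ∀ (mu : ℂ) (r : ℕ), ((X + C mu) ^ r ∣ f) →
      ∀ s, s < r → (aeval d₂ ((X - C mu) ^ (n - s))) 1 = 0 := by
    intro mu r hdvdr s
    induction s using Nat.strong_induction_on with
    | _ s ih =>
      intro hsr
      have hrl : r ≤ l := by
        have := natDegree_le_of_dvd hdvdr hfmonic.ne_zero
        rwa [natDegree_pow, natDegree_X_add_C, mul_one] at this
      have hsn : s < n + 1 := by omega
      have hnotmem : (aeval d₁ ((X + C mu) ^ s)) 1 ∉ Submodule.span ℂ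
          (Set.range fun j : Fin (n - s) => (aeval d₁ ((X + C mu) ^ (s + 1 + (j : ℕ)))) 1) := by
        intro hmem
        rw [Submodule.mem_span_range_iff_exists_fun] at hmem
        obtain ⟨c, hc⟩ := hmem
        set q : ℂ[X] := (X + C mu) ^ s -
          ∑ j : Fin (n - s), C (c j) * (X + C mu) ^ (s + 1 + (j : ℕ)) with hqdef
        have hqI : q ∈ annI S₁ T₁ := by
          rw [mem_annI, hqdef]
          simp only [map_sub, map_sum, map_mul, aeval_C, LinearMap.sub_apply,
            LinearMap.sum_apply, Module.End.mul_apply, Module.algebraMap_end_apply]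
          rw [sub_eq_zero, ← hc]
        have hdq : (X + C mu) ^ (s + 1) ∣ q := by
          refine dvd_trans (pow_dvd_pow _ (by omega)) (dvd_trans hdvdr (hfdvd q hqI))
        have hdsum : (X + C mu) ^ (s + 1) ∣
            ∑ j : Fin (n - s), C (c j) * (X + C mu) ^ (s + 1 + (j : ℕ)) :=
          Finset.dvd_sum fun j _ => Dvd.dvd.mul_left (pow_dvd_pow _ (by omega)) _
        have hds : (X + C mu) ^ (s + 1) ∣ (X + C mu) ^ s := by
          have : (X + C mu) ^ s = q +
              ∑ j : Fin (n - s), C (c j) * (X + C mu) ^ (s + 1 + (j : ℕ)) := by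
            rw [hqdef]; ring
          rw [this]
          exact dvd_add hdq hdsum
        have hne : ((X : ℂ[X]) + C mu) ^ s ≠ 0 := pow_ne_zero _ (monic_X_add_C mu).ne_zero
        have := natDegree_le_of_dvd hds hne
        rw [natDegree_pow, natDegree_pow, natDegree_X_add_C] at this
        omega
      obtain ⟨φ, hφx, hφW⟩ := Submodule.exists_dual_map_eq_bot_of_notMem hnotmem inferInstance
      have hrel := relφ mu φ
      have hterm : ∀ k ∈ Finset.range (n + 1), k ≠ s →
          ((n.choose k : ℂ) * φ ((aeval d₁ ((X + C mu) ^ k)) 1)) •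
            ((aeval d₂ ((X - C mu) ^ (n - k))) 1) = 0 := by
        intro k hk hks
        rw [Finset.mem_range] at hk
        rcases lt_or_gt_of_ne hks with hlt | hgt
        · rw [ih k hlt (by omega), smul_zero]
        · have hkW : (aeval d₁ ((X + C mu) ^ k)) 1 ∈ Submodule.span ℂ
              (Set.range fun j : Fin (n - s) =>
                (aeval d₁ ((X + C mu) ^ (s + 1 + (j : ℕ)))) 1) := by
            apply Submodule.subset_span
            refine ⟨⟨k - (s + 1), by omega⟩, ?_⟩
            show (aeval d₁ ((X + C mu) ^ (s + 1 + (k - (s + 1))))) 1 = _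
            rw [show s + 1 + (k - (s + 1)) = k by omega]
          rw [dual_vanish hφW hkW, mul_zero, zero_smul]
      rw [Finset.sum_eq_single_of_mem s (Finset.mem_range.mpr hsn) hterm] at hrel
      rcases smul_eq_zero.mp hrel with h0 | h0
      · rcases mul_eq_zero.mp h0 with h1 | h1
        · exact absurd h1 (Nat.cast_ne_zero.mpr (Nat.choose_pos (by omega)).ne')
        · exact absurd h1 hφx
      · exact h0
  -- f has a root
  obtain ⟨rho, hrho⟩ := Complex.exists_root
    (f := f) (Polynomial.natDegree_pos_iff_degree_pos.mp (by omega))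
  -- all roots of f are equal to rho
  have bvanish : ∀ mu : ℂ, IsRoot f mu → (aeval d₂ ((X + C mu) ^ n)) 1 = 0 := by
    intro mu hmu
    have h1 : (X + C (-mu)) ^ 1 ∣ f := by
      rw [pow_one, map_neg, ← sub_eq_add_neg]
      exact dvd_iff_isRoot.mpr hmu
    have := main (-mu) 1 h1 0 Nat.zero_lt_one
    rw [Nat.sub_zero, map_neg, sub_neg_eq_add] at this
    exact this
  have huniq : ∀ mu : ℂ, IsRoot f mu → mu = rho := by
    intro mu hmu
    by_contra hne
    have hcop : IsCoprime ((X + C mu) ^ n) ((X + C rho) ^ n) := by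
      apply IsCoprime.pow
      have hsub : IsUnit (-mu - -rho : ℂ) := isUnit_iff_ne_zero.mpr (by
        intro hc
        exact hne (by linear_combination -hc))
      have : IsCoprime (X - C (-mu)) (X - C (-rho)) :=
        Polynomial.isCoprime_X_sub_C_of_isUnit_sub hsub
      simpa [map_neg, sub_neg_eq_add] using this
    obtain ⟨u, v, huv⟩ := hcop
    have hone : (1 : A₂) = 0 := by
      have := congrArg (fun p => (aeval d₂ p) 1) huv
      simp only [map_add, map_mul, map_one, LinearMap.add_apply, Module.End.mul_apply,
        Module.End.one_apply] at this
      rw [bvanish mu hmu, bvanish rho hrho, map_zero, map_zero, add_zero] at this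
      exact this.symm
    exact one2 hone
  have hsplits : Splits f := IsAlgClosed.splits f
  have hroots : f.roots = Multiset.replicate l rho := by
    rw [Multiset.eq_replicate]
    exact ⟨by rw [splits_iff_card_roots.mp hsplits], fun mu hmu =>
      huniq mu (isRoot_of_mem_roots hmu)⟩
  have hfeq : f = (X - C rho) ^ l := by
    have := hsplits.eq_prod_roots_of_monic hfmonic
    rw [hroots, Multiset.map_replicate, Multiset.prod_replicate] at this
    exact this
  refine ⟨l, n + 1 - l, -rho, by omega, by omega, by omega, ?_, ?_⟩
  · rw [bridge1, map_neg, ← sub_eq_add_neg, ← hd₁, ← hfeq]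
    exact hfI
  · rw [bridge2, map_neg, sub_neg_eq_add, ← hd₂]
    have := main (-rho) l (by rw [hfeq, map_neg, ← sub_eq_add_neg]) (l - 1) (by omega)
    rw [map_neg, sub_neg_eq_add, show n - (l - 1) = n + 1 - l by omega] at this
    exact this

end TwoAlgebras

end GammaAux

/-- Proposition 6.6: for nonzero `S₁, T₁ ∈ A₁` and `S₂, T₂ ∈ A₂`,
`γ_n(S₁⊗1 + 1⊗S₂, T₁⊗1 + 1⊗T₂) = 0` iff there exist `l, m ≥ 1` with `l + m = n + 1`
and `λ ∈ ℂ` with `γ_l(S₁ + λ·1, T₁) = 0` and `γ_m(S₂ − λ·1, T₂) = 0`. -/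
theorem gamma_tensor_sum
    {A₁ A₂ : Type*} [Ring A₁] [Algebra ℂ A₁] [Ring A₂] [Algebra ℂ A₂]
    (S₁ T₁ : A₁) (S₂ T₂ : A₂)
    (hS₁ : S₁ ≠ 0) (hT₁ : T₁ ≠ 0) (hS₂ : S₂ ≠ 0) (hT₂ : T₂ ≠ 0)
    (n : ℕ) (hn : 1 ≤ n) :
    gamma n (S₁ ⊗ₜ[ℂ] (1 : A₂) + (1 : A₁) ⊗ₜ[ℂ] S₂)
        (T₁ ⊗ₜ[ℂ] (1 : A₂) + (1 : A₁) ⊗ₜ[ℂ] T₂) = 0 ↔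
      ∃ (l m : ℕ) (lam : ℂ), 0 < l ∧ 0 < m ∧ l + m = n + 1 ∧
        gamma l (S₁ + lam • 1) T₁ = 0 ∧ gamma m (S₂ - lam • 1) T₂ = 0 := by
  constructor
  · exact GammaAux.forward S₁ T₁ S₂ T₂ hS₁ hS₂ n hn
  · rintro ⟨l, m, lam, hl, hm, hlm, h₁, h₂⟩
    rw [GammaAux.key_expand_shift S₁ T₁ S₂ T₂ n lam]
    refine Finset.sum_eq_zero fun k hk => ?_
    rw [Finset.mem_range] at hk
    rcases le_or_gt l k with hc | hc
    · rw [GammaAux.gamma_zero_of_le hc h₁, smul_zero, TensorProduct.zero_tmul]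
    · rw [GammaAux.gamma_zero_of_le (show m ≤ n - k by omega) h₂, TensorProduct.tmul_zero]
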